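/- For every integer n ≥ 0: ∑_{n_1 ≥ 0} q^{n_1^2} [n choose n_1]_{q^2} = ∑_{r=-∞}^{∞} (-1)^r q^{2r^2} [2n choose n - 2r]_q. -/

import Mathlib

open Finset

noncomputable section

abbrev F := RatFunc ℚ

/-- The variable `q`, a transcendental element. -/
def q : F := RatFunc.X

/-- `(b;b)_n = ∏_{i=1}^n (1 - b^i)` -/
def pq (b : F) (n : ℕ) : F := ∏ i ∈ Finset.range n, (1 - b ^ (i + 1))

/-- Gaussian binomial coefficient in base `b`, zero when `k < 0` or `k > a`. -/
def qbin (b : F) (a k : ℤ) : F :=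
  if 0 ≤ k ∧ k ≤ a then pq b a.toNat / (pq b k.toNat * pq b (a - k).toNat) else 0

/-- Primed Gaussian binomial: equals 1 when `a < 0` and `k = 0`. -/
def qbin' (b : F) (a k : ℤ) : F :=
  if a < 0 ∧ k = 0 then 1 else qbin b a k

lemma q_ne_zero : q ≠ 0 := RatFunc.X_ne_zero

lemma q_pow_ne_one {m : ℕ} (h : m ≠ 0) : q ^ m ≠ 1 := by
  intro hc
  have h1 : (algebraMap (Polynomial ℚ) F) (Polynomial.X ^ m) = algebraMap (Polynomial ℚ) F 1 := by
    simpa [q, RatFunc.algebraMap_X] using hc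
  have h2 := RatFunc.algebraMap_injective ℚ h1
  have := congrArg (fun p => Polynomial.coeff p m) h2
  simp [Polynomial.coeff_one, h] at this

lemma pq_pow_ne_zero {j : ℕ} (hj : j ≠ 0) (n : ℕ) : pq (q ^ j) n ≠ 0 := by
  unfold pq
  refine Finset.prod_ne_zero_iff.2 fun i _ => ?_
  rw [← pow_mul]
  intro hc
  have : q ^ (j * (i + 1)) = 1 := by linear_combination -hc
  exact q_pow_ne_one (by positivity) this

lemma pq_q_ne_zero (n : ℕ) : pq q n ≠ 0 := by
  simpa using pq_pow_ne_zero one_ne_zero n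

lemma pq_q2_ne_zero (n : ℕ) : pq (q ^ 2) n ≠ 0 := pq_pow_ne_zero two_ne_zero n

section aux
variable {b : F} (hb : ∀ m : ℕ, pq b m ≠ 0)

lemma pq_zero : pq b 0 = 1 := by simp [pq]

lemma pq_succ (n : ℕ) : pq b (n + 1) = pq b n * (1 - b ^ (n + 1)) := by
  simp [pq, Finset.prod_range_succ]

lemma qbin_eq_zero {a k : ℤ} (h : ¬(0 ≤ k ∧ k ≤ a)) : qbin b a k = 0 := by simp [qbin, h]

include hb

lemma qbin_zero_right {a : ℤ} (ha : 0 ≤ a) : qbin b a 0 = 1 := by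
  rw [qbin, if_pos ⟨le_refl 0, ha⟩]; simp [pq_zero, div_self (hb a.toNat)]

lemma qbin_self {a : ℤ} (ha : 0 ≤ a) : qbin b a a = 1 := by
  rw [qbin, if_pos ⟨ha, le_refl a⟩]; simp [pq_zero, div_self (hb a.toNat)]

lemma pascal_aux1 (A K : ℕ) (h1 : 1 ≤ K) (h2 : K < A) :
    pq b A / (pq b K * pq b (A - K)) =
      pq b (A - 1) / (pq b K * pq b (A - 1 - K)) +
        b ^ (A - K) * (pq b (A - 1) / (pq b (K - 1) * pq b (A - K))) := by
  obtain ⟨K', rfl⟩ : ∃ K', K = K' + 1 := ⟨K - 1, by omega⟩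
  obtain ⟨D, rfl⟩ : ∃ D, A = K' + D + 2 := ⟨A - K' - 2, by omega⟩
  have hAK : K' + D + 2 - (K' + 1) = D + 1 := by omega
  have hAK2 : K' + D + 2 - 1 - (K' + 1) = D := by omega
  have hA1 : K' + D + 2 - 1 = K' + D + 1 := by omega
  rw [hAK, hAK2, hA1]
  rw [show K' + D + 2 = (K' + D + 1) + 1 by omega, pq_succ (K' + D + 1), pq_succ K', pq_succ D]
  have e1 : pq b (K' + D + 1) ≠ 0 := hb _
  have e2 : pq b K' ≠ 0 := hb _
  have e3 : pq b D ≠ 0 := hb _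
  have e4 : (1 : F) - b ^ (K' + 1) ≠ 0 := by
    have := hb (K' + 1); rw [pq_succ] at this
    exact right_ne_zero_of_mul this
  have e5 : (1 : F) - b ^ (D + 1) ≠ 0 := by
    have := hb (D + 1); rw [pq_succ] at this
    exact right_ne_zero_of_mul this
  simp only [Nat.add_sub_cancel]
  field_simp
  ring

lemma pascal_aux2 (A K : ℕ) (h1 : 1 ≤ K) (h2 : K < A) :
    pq b A / (pq b K * pq b (A - K)) =
      b ^ K * (pq b (A - 1) / (pq b K * pq b (A - 1 - K))) +
        pq b (A - 1) / (pq b (K - 1) * pq b (A - K)) := by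
  obtain ⟨K', rfl⟩ : ∃ K', K = K' + 1 := ⟨K - 1, by omega⟩
  obtain ⟨D, rfl⟩ : ∃ D, A = K' + D + 2 := ⟨A - K' - 2, by omega⟩
  have hAK : K' + D + 2 - (K' + 1) = D + 1 := by omega
  have hAK2 : K' + D + 2 - 1 - (K' + 1) = D := by omega
  have hA1 : K' + D + 2 - 1 = K' + D + 1 := by omega
  rw [hAK, hAK2, hA1]
  rw [show K' + D + 2 = (K' + D + 1) + 1 by omega, pq_succ (K' + D + 1), pq_succ K', pq_succ D]
  have e1 : pq b (K' + D + 1) ≠ 0 := hb _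
  have e2 : pq b K' ≠ 0 := hb _
  have e3 : pq b D ≠ 0 := hb _
  have e4 : (1 : F) - b ^ (K' + 1) ≠ 0 := by
    have := hb (K' + 1); rw [pq_succ] at this
    exact right_ne_zero_of_mul this
  have e5 : (1 : F) - b ^ (D + 1) ≠ 0 := by
    have := hb (D + 1); rw [pq_succ] at this
    exact right_ne_zero_of_mul this
  simp only [Nat.add_sub_cancel]
  field_simp
  ring

lemma qbin_pascal1 (a k : ℤ) (ha : 1 ≤ a) :
    qbin b a k = qbin b (a - 1) k + b ^ (a - k).toNat * qbin b (a - 1) (k - 1) := by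
  rcases lt_or_ge k 0 with hk | hk
  · rw [qbin_eq_zero (by omega), qbin_eq_zero (b := b) (by omega),
      qbin_eq_zero (b := b) (a := a - 1) (k := k - 1) (by omega)]
    ring
  rcases eq_or_lt_of_le hk with hk0 | hk1
  · subst k
    rw [qbin_zero_right hb (by omega), qbin_zero_right hb (by omega),
      qbin_eq_zero (b := b) (a := a - 1) (k := 0 - 1) (by omega)]
    simp
  rcases lt_or_ge a k with hka | hka
  · rw [qbin_eq_zero (by omega), qbin_eq_zero (b := b) (by omega),
      qbin_eq_zero (b := b) (a := a - 1) (k := k - 1) (by omega)]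
    ring
  rcases eq_or_lt_of_le hka with hke | hke
  · subst hke
    rw [qbin_self hb (by omega), qbin_eq_zero (by omega), qbin_self hb (by omega),
      show (k - k).toNat = 0 by omega]
    ring
  have h0k : (0 : ℤ) < k := by omega
  rw [qbin, if_pos ⟨hk, hka⟩, qbin, if_pos (by omega : (0:ℤ) ≤ k ∧ k ≤ a - 1),
    qbin, if_pos (by omega : (0:ℤ) ≤ k - 1 ∧ k - 1 ≤ a - 1)]
  have e1 : (a - 1).toNat = a.toNat - 1 := by omega
  have e2 : (a - 1 - k).toNat = a.toNat - 1 - k.toNat := by omega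
  have e3 : (a - k).toNat = a.toNat - k.toNat := by omega
  have e4 : (a - 1 - (k - 1)).toNat = a.toNat - k.toNat := by omega
  have e5 : (k - 1).toNat = k.toNat - 1 := by omega
  rw [e1, e2, e3, e4, e5]
  exact pascal_aux1 hb a.toNat k.toNat (by omega) (by omega)

lemma qbin_pascal2 (a k : ℤ) (ha : 1 ≤ a) :
    qbin b a k = b ^ k.toNat * qbin b (a - 1) k + qbin b (a - 1) (k - 1) := by
  rcases lt_or_ge k 0 with hk | hk
  · rw [qbin_eq_zero (by omega), qbin_eq_zero (b := b) (by omega),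
      qbin_eq_zero (b := b) (a := a - 1) (k := k - 1) (by omega)]
    ring
  rcases eq_or_lt_of_le hk with hk0 | hk1
  · subst k
    rw [qbin_zero_right hb (by omega), qbin_zero_right hb (by omega),
      qbin_eq_zero (b := b) (a := a - 1) (k := 0 - 1) (by omega)]
    simp
  rcases lt_or_ge a k with hka | hka
  · rw [qbin_eq_zero (by omega), qbin_eq_zero (b := b) (by omega),
      qbin_eq_zero (b := b) (a := a - 1) (k := k - 1) (by omega)]
    ring
  rcases eq_or_lt_of_le hka with hke | hke
  · subst hke
    rw [qbin_self hb (by omega), qbin_eq_zero (by omega), qbin_self hb (by omega)]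
    ring
  have h0k : (0 : ℤ) < k := by omega
  rw [qbin, if_pos ⟨hk, hka⟩, qbin, if_pos (by omega : (0:ℤ) ≤ k ∧ k ≤ a - 1),
    qbin, if_pos (by omega : (0:ℤ) ≤ k - 1 ∧ k - 1 ≤ a - 1)]
  have e1 : (a - 1).toNat = a.toNat - 1 := by omega
  have e2 : (a - 1 - k).toNat = a.toNat - 1 - k.toNat := by omega
  have e3 : (a - k).toNat = a.toNat - k.toNat := by omega
  have e4 : (a - 1 - (k - 1)).toNat = a.toNat - k.toNat := by omega
  have e5 : (k - 1).toNat = k.toNat - 1 := by omega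
  rw [e1, e2, e3, e4, e5]
  exact pascal_aux2 hb a.toNat k.toNat (by omega) (by omega)

end aux

lemma qbin_twostep (a : ℤ) (ha : 0 ≤ a) (m : ℤ) :
    qbin q (a + 2) m =
      q ^ m.toNat * qbin q a m + (1 + q ^ (a + 1).toNat) * qbin q a (m - 1) +
        q ^ (a + 2 - m).toNat * qbin q a (m - 2) := by
  rw [qbin_pascal1 pq_q_ne_zero (a + 2) m (by omega)]
  rw [show a + 2 - 1 = a + 1 by ring]
  rw [qbin_pascal2 pq_q_ne_zero (a + 1) m (by omega),
    qbin_pascal2 pq_q_ne_zero (a + 1) (m - 1) (by omega)]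
  rw [show a + 1 - 1 = a by ring, show m - 1 - 1 = m - 2 by ring]
  by_cases hB : 0 ≤ m - 1 ∧ m - 1 ≤ a
  · have key : q ^ (a + 2 - m).toNat * q ^ (m - 1).toNat = q ^ (a + 1).toNat := by
      rw [← pow_add]; congr 1; omega
    linear_combination qbin q a (m - 1) * key
  · rw [qbin_eq_zero hB]
    ring

lemma lhs_prod (n : ℕ) :
    (∑ k ∈ range (n + 1), q ^ (k ^ 2) * qbin (q ^ 2) (n : ℤ) (k : ℤ)) =
      ∏ j ∈ range n, (1 + q ^ (2 * j + 1)) := by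
  induction n with
  | zero =>
    simp [qbin_zero_right pq_q2_ne_zero (le_refl 0)]
  | succ n ih =>
    rw [prod_range_succ, ← ih]
    have step : ∀ k ∈ range (n + 2),
        q ^ (k ^ 2) * qbin (q ^ 2) ((n + 1 : ℕ) : ℤ) (k : ℤ) =
          q ^ (k ^ 2) * qbin (q ^ 2) (n : ℤ) (k : ℤ) +
            q ^ (k ^ 2) * (q ^ 2) ^ ((n : ℤ) + 1 - k).toNat * qbin (q ^ 2) (n : ℤ) ((k : ℤ) - 1) := by
      intro k _
      have := qbin_pascal1 pq_q2_ne_zero ((n : ℤ) + 1) (k : ℤ) (by omega)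
      rw [show ((n : ℤ) + 1 - 1) = (n : ℤ) by ring] at this
      push_cast
      rw [this]
      ring
    rw [Finset.sum_congr rfl step, Finset.sum_add_distrib]
    have hA : (∑ k ∈ range (n + 2), q ^ (k ^ 2) * qbin (q ^ 2) (n : ℤ) (k : ℤ)) =
        ∑ k ∈ range (n + 1), q ^ (k ^ 2) * qbin (q ^ 2) (n : ℤ) (k : ℤ) := by
      rw [Finset.sum_range_succ, qbin_eq_zero (by omega : ¬((0:ℤ) ≤ ((n+1:ℕ):ℤ) ∧ ((n+1:ℕ):ℤ) ≤ (n:ℤ)))]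
      ring
    have hB : (∑ k ∈ range (n + 2),
          q ^ (k ^ 2) * (q ^ 2) ^ ((n : ℤ) + 1 - k).toNat * qbin (q ^ 2) (n : ℤ) ((k : ℤ) - 1)) =
        q ^ (2 * n + 1) * ∑ k ∈ range (n + 1), q ^ (k ^ 2) * qbin (q ^ 2) (n : ℤ) (k : ℤ) := by
      rw [Finset.sum_range_succ']
      have h0 : q ^ (0 ^ 2) * (q ^ 2) ^ ((n : ℤ) + 1 - (0:ℕ)).toNat *
          qbin (q ^ 2) (n : ℤ) (((0:ℕ) : ℤ) - 1) = 0 := by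
        rw [qbin_eq_zero (by omega)]
        ring
      rw [h0, add_zero, Finset.mul_sum]
      refine Finset.sum_congr rfl fun k hk => ?_
      have hkn : k ≤ n := by simpa [Nat.lt_succ_iff] using hk
      have e1 : ((n : ℤ) + 1 - ((k : ℤ) + 1)).toNat = n - k := by omega
      have e2 : (((k + 1 : ℕ)) : ℤ) = (k : ℤ) + 1 := by push_cast; ring
      rw [e2, e1, show ((k:ℤ) + 1 - 1) = (k : ℤ) by ring, ← pow_mul]
      rw [show q ^ ((k+1)^2) * q ^ (2 * (n - k)) * qbin (q ^ 2) (n:ℤ) (k:ℤ) =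
        q ^ ((k+1)^2 + 2 * (n - k)) * qbin (q ^ 2) (n:ℤ) (k:ℤ) by rw [pow_add]]
      rw [show q ^ (2*n+1) * (q ^ (k^2) * qbin (q ^ 2) (n:ℤ) (k:ℤ)) =
        q ^ (2*n+1 + k^2) * qbin (q ^ 2) (n:ℤ) (k:ℤ) by rw [pow_add]; ring]
      congr 2
      have : (k+1)^2 = k^2 + 2*k + 1 := by ring
      omega
    rw [hA, hB]
    ring

def fr (n : ℕ) (r : ℤ) : F := (-1 : F) ^ r * q ^ (2 * r ^ 2) * qbin q (2 * (n : ℤ)) ((n : ℤ) - 2 * r)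

def gr (n : ℕ) (r : ℤ) : F :=
  (-1 : F) ^ r * q ^ (2 * r ^ 2) *
    (q ^ ((n : ℤ) + 1 - 2 * r).toNat * qbin q (2 * (n : ℤ)) ((n : ℤ) + 1 - 2 * r))

lemma neg_one_zpow_ne_zero (r : ℤ) : ((-1 : F) ^ r) ≠ 0 := zpow_ne_zero r (by norm_num)

lemma fr_support (n : ℕ) : Function.support (fr n) ⊆ ↑(Finset.Icc (-(n : ℤ)) (n : ℤ)) := by
  intro r hr
  simp only [Function.mem_support, fr] at hr
  have h3 : qbin q (2 * (n : ℤ)) ((n : ℤ) - 2 * r) ≠ 0 := fun hc => hr (by rw [hc]; ring)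
  have : (0 : ℤ) ≤ (n : ℤ) - 2 * r ∧ (n : ℤ) - 2 * r ≤ 2 * (n : ℤ) := by
    by_contra hc; exact h3 (qbin_eq_zero hc)
  simp only [Finset.coe_Icc, Set.mem_Icc]
  omega

lemma gr_support (n : ℕ) : Function.support (gr n) ⊆ ↑(Finset.Icc (-(n : ℤ) - 1) ((n : ℤ) + 1)) := by
  intro r hr
  simp only [Function.mem_support, gr] at hr
  have h3 : qbin q (2 * (n : ℤ)) ((n : ℤ) + 1 - 2 * r) ≠ 0 := fun hc => hr (by rw [hc]; ring)
  have : (0 : ℤ) ≤ (n : ℤ) + 1 - 2 * r ∧ (n : ℤ) + 1 - 2 * r ≤ 2 * (n : ℤ) := by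
    by_contra hc; exact h3 (qbin_eq_zero hc)
  simp only [Finset.coe_Icc, Set.mem_Icc]
  omega

lemma fr_finite (n : ℕ) : (Function.support (fr n)).Finite :=
  (Finset.Icc (-(n : ℤ)) (n : ℤ)).finite_toSet.subset (fr_support n)

lemma gr_finite (n : ℕ) : (Function.support (gr n)).Finite :=
  (Finset.Icc (-(n : ℤ) - 1) ((n : ℤ) + 1)).finite_toSet.subset (gr_support n)

lemma fr_rec (n : ℕ) (r : ℤ) :
    fr (n + 1) r + gr n (r + 1) = gr n r + (1 + q ^ (2 * n + 1)) * fr n r := by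
  unfold fr gr
  have hcast : ((n + 1 : ℕ) : ℤ) = (n : ℤ) + 1 := by push_cast; ring
  rw [hcast, show 2 * ((n : ℤ) + 1) = 2 * (n : ℤ) + 2 by ring,
    qbin_twostep (2 * (n : ℤ)) (by omega) ((n : ℤ) + 1 - 2 * r)]
  rw [show (n : ℤ) + 1 - 2 * r - 1 = (n : ℤ) - 2 * r by ring,
    show (n : ℤ) + 1 - 2 * r - 2 = (n : ℤ) + 1 - 2 * (r + 1) by ring,
    show 2 * (n : ℤ) + 2 - ((n : ℤ) + 1 - 2 * r) = (n : ℤ) + 1 + 2 * r by ring,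
    show (2 * (n : ℤ) + 1).toNat = 2 * n + 1 by omega]
  by_cases hB : (0 : ℤ) ≤ (n : ℤ) + 1 - 2 * (r + 1) ∧ (n : ℤ) + 1 - 2 * (r + 1) ≤ 2 * (n : ℤ)
  · have key : (-1 : F) ^ (r + 1) * q ^ (2 * (r + 1) ^ 2) * q ^ (((n : ℤ) + 1 - 2 * (r + 1)).toNat) =
        -((-1 : F) ^ r * q ^ (2 * r ^ 2) * q ^ (((n : ℤ) + 1 + 2 * r).toNat)) := by
      rw [zpow_add_one₀ (by norm_num : (-1 : F) ≠ 0)]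
      rw [← zpow_natCast q (((n : ℤ) + 1 - 2 * (r + 1)).toNat),
        ← zpow_natCast q (((n : ℤ) + 1 + 2 * r).toNat),
        Int.toNat_of_nonneg (by omega), Int.toNat_of_nonneg (by omega)]
      have e : q ^ (2 * (r + 1) ^ 2) * q ^ ((n : ℤ) + 1 - 2 * (r + 1)) =
          q ^ (2 * r ^ 2) * q ^ ((n : ℤ) + 1 + 2 * r) := by
        rw [← zpow_add₀ q_ne_zero, ← zpow_add₀ q_ne_zero,
          show 2 * (r + 1) ^ 2 + ((n : ℤ) + 1 - 2 * (r + 1)) = 2 * r ^ 2 + ((n : ℤ) + 1 + 2 * r) by ring]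
      linear_combination (-((-1 : F) ^ r)) * e
    linear_combination qbin q (2 * (n : ℤ)) ((n : ℤ) + 1 - 2 * (r + 1)) * key
  · rw [qbin_eq_zero hB]
    ring

lemma fr_sum_rec (n : ℕ) :
    (∑ᶠ r : ℤ, fr (n + 1) r) = (1 + q ^ (2 * n + 1)) * ∑ᶠ r : ℤ, fr n r := by
  have hf : (Function.support (fr n)).Finite := fr_finite n
  have hf1 : (Function.support (fr (n + 1))).Finite := fr_finite (n + 1)
  have hg : (Function.support (gr n)).Finite := gr_finite n
  have hg1 : (Function.support (fun r : ℤ => gr n (r + 1))).Finite := by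
    refine ((Finset.Icc (-(n : ℤ) - 2) ((n : ℤ))).finite_toSet.subset ?_)
    intro r hr
    have := gr_support n (Function.mem_support.2 hr)
    simp only [Finset.coe_Icc, Set.mem_Icc] at this ⊢
    omega
  have hcf : (Function.support (fun r : ℤ => (1 + q ^ (2 * n + 1)) * fr n r)).Finite := by
    refine hf.subset ?_
    intro r hr
    simp only [Function.mem_support] at hr ⊢
    intro hc
    exact hr (by rw [hc, mul_zero])
  have shift : (∑ᶠ r : ℤ, gr n (r + 1)) = ∑ᶠ r : ℤ, gr n r :=
    finsum_comp_equiv (Equiv.addRight (1 : ℤ))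
  have h1 : (∑ᶠ r : ℤ, (fr (n + 1) r + gr n (r + 1))) =
      ∑ᶠ r : ℤ, (gr n r + (1 + q ^ (2 * n + 1)) * fr n r) := finsum_congr (fr_rec n)
  rw [finsum_add_distrib hf1 hg1, finsum_add_distrib hg hcf, shift,
    ← mul_finsum (fr n) _] at h1
  have := h1
  linear_combination this

lemma fr_sum_zero : (∑ᶠ r : ℤ, fr 0 r) = 1 := by
  rw [finsum_eq_single (fr 0) 0 ?_]
  · simp [fr, qbin_zero_right pq_q_ne_zero (le_refl 0)]
  · intro x hx
    unfold fr
    rw [qbin_eq_zero (by push_cast; omega)]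
    ring

lemma fr_sum_prod (n : ℕ) : (∑ᶠ r : ℤ, fr n r) = ∏ j ∈ range n, (1 + q ^ (2 * j + 1)) := by
  induction n with
  | zero => simpa using fr_sum_zero
  | succ n ih => rw [fr_sum_rec, ih, prod_range_succ]; ring

theorem stmt6 (n : ℕ) :
    (∑ᶠ n1 : ℕ, q ^ (n1 ^ 2) * qbin (q ^ 2) (n : ℤ) (n1 : ℤ)) =
      ∑ᶠ r : ℤ, (-1 : F) ^ r * q ^ (2 * r ^ 2) * qbin q (2 * (n : ℤ)) ((n : ℤ) - 2 * r) := by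
  have hL : (∑ᶠ n1 : ℕ, q ^ (n1 ^ 2) * qbin (q ^ 2) (n : ℤ) (n1 : ℤ)) =
      ∑ k ∈ range (n + 1), q ^ (k ^ 2) * qbin (q ^ 2) (n : ℤ) (k : ℤ) := by
    refine finsum_eq_sum_of_support_subset _ ?_
    intro x hx
    simp only [Function.mem_support] at hx
    simp only [Finset.coe_range, Set.mem_Iio]
    by_contra hc
    exact hx (by rw [qbin_eq_zero (by omega)]; ring)
  have hR : (∑ᶠ r : ℤ, (-1 : F) ^ r * q ^ (2 * r ^ 2) * qbin q (2 * (n : ℤ)) ((n : ℤ) - 2 * r)) =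
      ∑ᶠ r : ℤ, fr n r := rfl
  rw [hL, hR, lhs_prod, fr_sum_prod]
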